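/- Let λ ≠ 0 be a real number and let u, v : ℝ × ℝ → ℝ be three times continuously differentiable functions such that u solves the Chaffee–Infante equation u_t - u_xx + λ(u³ - u) = 0 and v solves its adjoint equation λ(3u²v - v) - v_t - v_xx = 0, at every point of ℝ². Then the pair of conserved vectors associated with the space-translation symmetry G₂ = ∂/∂x, namely T^t = -u_x·v and T^x = v·(u_t - u_xx + λu³ - λu) - u_x·v_x + u_xx·v, satisfies the conservation law ∂T^t/∂t + ∂T^x/∂x = 0 at every point of ℝ². -/

import Mathlib

/-- Conservation law from the space-translation symmetry `G₂ = ∂/∂x`: if `u`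
solves the Chaffee–Infante equation and `v` solves its adjoint equation (both
C³, `λ ≠ 0`), then `T^t = -u_x·v` and
`T^x = v·(u_t - u_xx + λu³ - λu) - u_x·v_x + u_xx·v`
satisfy `∂T^t/∂t + ∂T^x/∂x = 0` everywhere. -/
private lemma sliceX {F : ℝ×ℝ → ℝ} {x t : ℝ} (hF : DifferentiableAt ℝ F (x,t)) :
    HasDerivAt (fun y => F (y, t)) (fderiv ℝ F (x,t) (1,0)) x :=
  hF.hasFDerivAt.comp_hasDerivAt x ((hasDerivAt_id x).prodMk (hasDerivAt_const x t))

private lemma sliceT {F : ℝ×ℝ → ℝ} {x t : ℝ} (hF : DifferentiableAt ℝ F (x,t)) :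
    HasDerivAt (fun s => F (x, s)) (fderiv ℝ F (x,t) (0,1)) t :=
  hF.hasFDerivAt.comp_hasDerivAt t ((hasDerivAt_const t x).prodMk (hasDerivAt_id t))

private lemma sliceX_apply {F : ℝ×ℝ → (ℝ×ℝ →L[ℝ] ℝ)} {x t : ℝ}
    (hF : DifferentiableAt ℝ F (x,t)) (w : ℝ×ℝ) :
    HasDerivAt (fun y => F (y, t) w) (fderiv ℝ F (x,t) (1,0) w) x := by
  have h := (hF.hasFDerivAt.clm_apply (hasFDerivAt_const w (x,t))).comp_hasDerivAt
    x ((hasDerivAt_id x).prodMk (hasDerivAt_const x t))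
  simp at h
  exact h

private lemma sliceT_apply {F : ℝ×ℝ → (ℝ×ℝ →L[ℝ] ℝ)} {x t : ℝ}
    (hF : DifferentiableAt ℝ F (x,t)) (w : ℝ×ℝ) :
    HasDerivAt (fun s => F (x, s) w) (fderiv ℝ F (x,t) (0,1) w) t := by
  have h := (hF.hasFDerivAt.clm_apply (hasFDerivAt_const w (x,t))).comp_hasDerivAt
    t ((hasDerivAt_const t x).prodMk (hasDerivAt_id t))
  simp at h
  exact h

theorem conservation_law_space_translation (lam : ℝ) (hlam : lam ≠ 0)
    (u v : ℝ → ℝ → ℝ)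
    (hu : ContDiff ℝ 3 (fun p : ℝ × ℝ => u p.1 p.2))
    (hv : ContDiff ℝ 3 (fun p : ℝ × ℝ => v p.1 p.2))
    (hsol : ∀ x t : ℝ,
      deriv (fun s => u x s) t - iteratedDeriv 2 (fun y => u y t) x
        + lam * ((u x t)^3 - u x t) = 0)
    (hadj : ∀ x t : ℝ,
      lam * (3 * (u x t)^2 * v x t - v x t)
        - deriv (fun s => v x s) t - iteratedDeriv 2 (fun y => v y t) x = 0)
    (Tt Tx : ℝ → ℝ → ℝ)
    (hTt : ∀ x t : ℝ, Tt x t = -(deriv (fun y => u y t) x) * v x t)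
    (hTx : ∀ x t : ℝ, Tx x t
      = v x t * (deriv (fun s => u x s) t - iteratedDeriv 2 (fun y => u y t) x
          + lam * (u x t)^3 - lam * u x t)
        - deriv (fun y => u y t) x * deriv (fun y => v y t) x
        + iteratedDeriv 2 (fun y => u y t) x * v x t) :
    ∀ x t : ℝ,
      deriv (fun s => Tt x s) t + deriv (fun y => Tx y t) x = 0 := by
  set U : ℝ × ℝ → ℝ := fun p => u p.1 p.2 with hUdef
  set V : ℝ × ℝ → ℝ := fun p => v p.1 p.2 with hVdef
  have hUd : Differentiable ℝ U := hu.differentiable (by norm_num)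
  have hVd : Differentiable ℝ V := hv.differentiable (by norm_num)
  have hU1 : ContDiff ℝ 2 (fderiv ℝ U) := hu.fderiv_right (by norm_num)
  have hV1 : ContDiff ℝ 2 (fderiv ℝ V) := hv.fderiv_right (by norm_num)
  have hU1d : Differentiable ℝ (fderiv ℝ U) := hU1.differentiable (by norm_num)
  have hV1d : Differentiable ℝ (fderiv ℝ V) := hV1.differentiable (by norm_num)
  have hU2d : Differentiable ℝ (fderiv ℝ (fderiv ℝ U)) :=
    (hU1.fderiv_right (m := 1) (by norm_num)).differentiable (by norm_num)
  have huxxd : Differentiable ℝ (fun p => fderiv ℝ (fderiv ℝ U) p (1,0) (1,0)) :=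
    (hU2d.clm_apply (differentiable_const _)).clm_apply (differentiable_const _)
  -- slice derivative lemmas
  have L1u : ∀ y t : ℝ, HasDerivAt (fun z => u z t) (fderiv ℝ U (y,t) (1,0)) y :=
    fun y t => sliceX (F := U) (hUd _)
  have L1v : ∀ y t : ℝ, HasDerivAt (fun z => v z t) (fderiv ℝ V (y,t) (1,0)) y :=
    fun y t => sliceX (F := V) (hVd _)
  have L2u : ∀ y t : ℝ, HasDerivAt (fun s => u y s) (fderiv ℝ U (y,t) (0,1)) t :=
    fun y t => sliceT (F := U) (hUd _)
  have L2v : ∀ y t : ℝ, HasDerivAt (fun s => v y s) (fderiv ℝ V (y,t) (0,1)) t :=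
    fun y t => sliceT (F := V) (hVd _)
  have L3u : ∀ y t : ℝ, iteratedDeriv 2 (fun z => u z t) y
      = fderiv ℝ (fderiv ℝ U) (y,t) (1,0) (1,0) := by
    intro y t
    rw [iteratedDeriv_succ, iteratedDeriv_one]
    have e : deriv (fun z => u z t) = fun z => fderiv ℝ U (z,t) (1,0) :=
      funext fun z => (L1u z t).deriv
    rw [e]
    exact (sliceX_apply (F := fderiv ℝ U) (hU1d _) (1,0)).deriv
  have L3v : ∀ y t : ℝ, iteratedDeriv 2 (fun z => v z t) y
      = fderiv ℝ (fderiv ℝ V) (y,t) (1,0) (1,0) := by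
    intro y t
    rw [iteratedDeriv_succ, iteratedDeriv_one]
    have e : deriv (fun z => v z t) = fun z => fderiv ℝ V (z,t) (1,0) :=
      funext fun z => (L1v z t).deriv
    rw [e]
    exact (sliceX_apply (F := fderiv ℝ V) (hV1d _) (1,0)).deriv
  -- the PDEs in fderiv language
  have Hsol : ∀ y t : ℝ, fderiv ℝ U (y,t) (0,1)
      = fderiv ℝ (fderiv ℝ U) (y,t) (1,0) (1,0) - lam * ((u y t)^3 - u y t) := by
    intro y t
    have h := hsol y t
    rw [(L2u y t).deriv, L3u y t] at h
    linarith
  have Hadj : ∀ y t : ℝ, fderiv ℝ V (y,t) (0,1) + fderiv ℝ (fderiv ℝ V) (y,t) (1,0) (1,0)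
      = lam * (3 * (u y t)^2 * v y t - v y t) := by
    intro y t
    have h := hadj y t
    rw [(L2v y t).deriv, L3v y t] at h
    linarith
  intro x t
  -- time derivative of Tt
  have e1 : (fun s => Tt x s) = fun s => -(fderiv ℝ U (x,s) (1,0)) * v x s :=
    funext fun s => by rw [hTt x s, (L1u x s).deriv]
  have hdTt : HasDerivAt (fun s => Tt x s)
      (-(fderiv ℝ (fderiv ℝ U) (x,t) (0,1) (1,0)) * v x t
        + -(fderiv ℝ U (x,t) (1,0)) * fderiv ℝ V (x,t) (0,1)) t := by
    rw [e1]
    exact ((sliceT_apply (F := fderiv ℝ U) (hU1d _) (1,0)).neg).mul (L2v x t)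
  -- space derivative of Tx
  have e2 : (fun y => Tx y t) = fun y =>
      -(fderiv ℝ U (y,t) (1,0) * fderiv ℝ V (y,t) (1,0))
        + fderiv ℝ (fderiv ℝ U) (y,t) (1,0) (1,0) * v y t :=
    funext fun y => by
      rw [hTx y t, (L1u y t).deriv, (L1v y t).deriv, (L2u y t).deriv, L3u y t, Hsol y t]
      ring
  have h_uxx_x : HasDerivAt (fun y => fderiv ℝ (fderiv ℝ U) (y,t) (1,0) (1,0))
      (fderiv ℝ (fun p => fderiv ℝ (fderiv ℝ U) p (1,0) (1,0)) (x,t) (1,0)) x :=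
    sliceX (F := fun p => fderiv ℝ (fderiv ℝ U) p (1,0) (1,0)) (huxxd _)
  have hdTx : HasDerivAt (fun y => Tx y t)
      (-(fderiv ℝ (fderiv ℝ U) (x,t) (1,0) (1,0) * fderiv ℝ V (x,t) (1,0)
          + fderiv ℝ U (x,t) (1,0) * fderiv ℝ (fderiv ℝ V) (x,t) (1,0) (1,0))
        + (fderiv ℝ (fun p => fderiv ℝ (fderiv ℝ U) p (1,0) (1,0)) (x,t) (1,0) * v x t
          + fderiv ℝ (fderiv ℝ U) (x,t) (1,0) (1,0) * fderiv ℝ V (x,t) (1,0))) x := by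
    rw [e2]
    exact (((sliceX_apply (F := fderiv ℝ U) (hU1d _) (1,0)).mul
      (sliceX_apply (F := fderiv ℝ V) (hV1d _) (1,0))).neg).add
      (h_uxx_x.mul (L1v x t))
  -- identify the third derivative via the differentiated PDE
  have w1 : HasDerivAt (fun y => fderiv ℝ U (y,t) (0,1))
      (fderiv ℝ (fderiv ℝ U) (x,t) (1,0) (0,1)) x :=
    sliceX_apply (F := fderiv ℝ U) (hU1d _) (0,1)
  have w2 : HasDerivAt (fun y => fderiv ℝ U (y,t) (0,1))
      (fderiv ℝ (fun p => fderiv ℝ (fderiv ℝ U) p (1,0) (1,0)) (x,t) (1,0)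
        - lam * ((3:ℕ) * u x t ^ 2 * fderiv ℝ U (x,t) (1,0) - fderiv ℝ U (x,t) (1,0))) x := by
    have e3 : (fun y => fderiv ℝ U (y,t) (0,1))
        = fun y => fderiv ℝ (fderiv ℝ U) (y,t) (1,0) (1,0) - lam * ((u y t)^3 - u y t) :=
      funext fun y => Hsol y t
    rw [e3]
    exact h_uxx_x.sub (HasDerivAt.const_mul lam (((L1u x t).pow 3).sub (L1u x t)))
  have hA := w1.unique w2
  have hsym : fderiv ℝ (fderiv ℝ U) (x,t) (0,1) (1,0)
      = fderiv ℝ (fderiv ℝ U) (x,t) (1,0) (0,1) :=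
    second_derivative_symmetric (fun y => (hUd y).hasFDerivAt)
      ((hU1d (x,t)).hasFDerivAt) (0,1) (1,0)
  rw [hdTt.deriv, hdTx.deriv, hsym, hA]
  have h := Hadj x t
  push_cast
  linear_combination (-(fderiv ℝ U (x,t) (1,0))) * h
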